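/- Let p be a prime and e a positive integer. If π(p^e) ≠ π(p^{e+1}), then for every positive integer i one has π(p^{e+i}) = p^i · π(p^e). -/

import Mathlib

set_option maxHeartbeats 1000000

/-- The Pisano period `π(m)`: the least positive integer `k` such that
`F_{n+k} ≡ F_n (mod m)` for all `n ≥ 0`. -/
noncomputable def pisano (m : ℕ) : ℕ :=
  sInf {k : ℕ | 0 < k ∧ ∀ n : ℕ, Nat.fib (n + k) ≡ Nat.fib n [MOD m]}

namespace PisanoAux

open Matrix Finset

def isPer (m k : ℕ) : Prop := ∀ n : ℕ, Nat.fib (n + k) ≡ Nat.fib n [MOD m]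

lemma isPer_iff {m k : ℕ} :
    isPer m k ↔ Nat.fib k ≡ 0 [MOD m] ∧ Nat.fib (k + 1) ≡ 1 [MOD m] := by
  constructor
  · intro h
    exact ⟨by simpa using h 0, by simpa [Nat.add_comm] using h 1⟩
  · rintro ⟨h0, h1⟩
    have key : ∀ n, Nat.fib (n + k) ≡ Nat.fib n [MOD m] ∧
        Nat.fib (n + 1 + k) ≡ Nat.fib (n + 1) [MOD m] := by
      intro n
      induction n with
      | zero => exact ⟨by simpa using h0, by simpa [Nat.add_comm] using h1⟩
      | succ n ih =>
        refine ⟨ih.2, ?_⟩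
        have e1 : n + 1 + 1 + k = (n + k) + 2 := by omega
        rw [e1, Nat.fib_add_two, Nat.fib_add_two]
        have e2 : n + k + 1 = n + 1 + k := by omega
        rw [e2]
        exact ih.1.add ih.2
    exact fun n => (key n).1

lemma isPer_zero (m : ℕ) : isPer m 0 := fun n => by simp [Nat.ModEq.refl]

lemma isPer_add {m a b : ℕ} (ha : isPer m a) (hb : isPer m b) : isPer m (a + b) := by
  intro n
  have e1 : n + (a + b) = (n + b) + a := by omega
  rw [e1]
  exact (ha (n + b)).trans (hb n)

lemma isPer_mul {m a : ℕ} (ha : isPer m a) (q : ℕ) : isPer m (a * q) := by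
  induction q with
  | zero => simpa using isPer_zero m
  | succ q ih => rw [Nat.mul_succ]; exact isPer_add ih ha

lemma isPer_cancel {m a r : ℕ} (ha : isPer m a) (har : isPer m (a + r)) : isPer m r := by
  intro n
  have h1 := ha (n + r)
  have h2 := har n
  have e1 : n + (a + r) = n + r + a := by omega
  rw [e1] at h2
  exact (h1.symm.trans h2)

lemma exists_isPer (m : ℕ) (hm : 2 ≤ m) : ∃ k, 0 < k ∧ isPer m k := by
  haveI : NeZero m := ⟨by omega⟩
  obtain ⟨i, j, hij, hfe⟩ :=
    Finite.exists_ne_map_eq_of_infinite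
      (fun n : ℕ => ((Nat.fib n : ZMod m), (Nat.fib (n + 1) : ZMod m)))
  wlog hlt : i < j generalizing i j
  · exact this j i hij.symm hfe.symm (by omega)
  set k := j - i with hkdef
  have hkpos : 0 < k := by omega
  have hj : j = i + k := by omega
  have G : ∀ t : ℕ, Nat.fib (i - t + k) ≡ Nat.fib (i - t) [MOD m] ∧
      Nat.fib (i - t + 1 + k) ≡ Nat.fib (i - t + 1) [MOD m] := by
    intro t
    induction t with
    | zero =>
      simp only [Nat.sub_zero]
      have h1 : (Nat.fib (i + k) : ZMod m) = (Nat.fib i : ZMod m) := by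
        rw [← hj]; exact congrArg Prod.fst hfe.symm
      have h2 : (Nat.fib (i + 1 + k) : ZMod m) = (Nat.fib (i + 1) : ZMod m) := by
        have : i + 1 + k = j + 1 := by omega
        rw [this]; exact congrArg Prod.snd hfe.symm
      exact ⟨(ZMod.natCast_eq_natCast_iff _ _ _).1 h1,
        (ZMod.natCast_eq_natCast_iff _ _ _).1 h2⟩
    | succ t ih =>
      rcases Nat.eq_zero_or_pos (i - t) with h0 | h0
      · have : i - (t + 1) = i - t := by omega
        rw [this]; exact ih
      · have e1 : i - t = (i - (t + 1)) + 1 := by omega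
        rw [e1] at ih
        refine ⟨?_, ih.1⟩
        have h2 := ih.2
        have e2 : i - (t + 1) + 1 + 1 = (i - (t + 1)) + 2 := by omega
        have e3 : i - (t + 1) + 1 + 1 + k = (i - (t + 1) + k) + 2 := by omega
        rw [e2, e3, Nat.fib_add_two, Nat.fib_add_two] at h2
        have e4 : i - (t+1) + k + 1 = i - (t+1) + 1 + k := by omega
        rw [e4] at h2
        exact Nat.ModEq.add_right_cancel ih.1 h2
  have G0 := G i
  simp only [Nat.sub_self] at G0
  refine ⟨k, hkpos, isPer_iff.2 ⟨by simpa using G0.1, by simpa [Nat.add_comm] using G0.2⟩⟩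

lemma pisano_def (m : ℕ) : pisano m = sInf {k : ℕ | 0 < k ∧ isPer m k} := rfl

lemma pisano_spec {m : ℕ} (hm : 2 ≤ m) : 0 < pisano m ∧ isPer m (pisano m) := by
  have h := Nat.sInf_mem (s := {k : ℕ | 0 < k ∧ isPer m k})
    (by obtain ⟨k, hk⟩ := exists_isPer m hm; exact ⟨k, hk⟩)
  exact h

lemma pisano_le {m k : ℕ} (hk : 0 < k) (h : isPer m k) : pisano m ≤ k :=
  Nat.sInf_le ⟨hk, h⟩

lemma pisano_dvd {m k : ℕ} (hm : 2 ≤ m) (hk : isPer m k) : pisano m ∣ k := by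
  obtain ⟨hpos, hper⟩ := pisano_spec hm
  set d := pisano m with hd
  have hr : isPer m (k % d) := by
    have hmul : isPer m (d * (k / d)) := isPer_mul hper _
    have : d * (k / d) + k % d = k := Nat.div_add_mod k d
    exact isPer_cancel hmul (by rwa [this])
  by_contra hnd
  have hrpos : 0 < k % d := by
    rcases Nat.eq_zero_or_pos (k % d) with h0 | h0
    · exact absurd (Nat.dvd_of_mod_eq_zero h0) hnd
    · exact h0
  have := pisano_le hrpos hr
  have := Nat.mod_lt k hpos
  omega

lemma pisano_dvd_pisano {a b : ℕ} (ha : 2 ≤ a) (hb : 2 ≤ b) (hab : a ∣ b) :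
    pisano a ∣ pisano b := by
  have hper := (pisano_spec hb).2
  exact pisano_dvd ha (fun n => ((hper n).of_dvd hab))

abbrev Mat := Matrix (Fin 2) (Fin 2) ℤ

def Q : Mat := !![1, 1; 1, 0]

lemma Q_pow_succ (k : ℕ) :
    Q ^ (k + 1) = !![(Nat.fib (k + 2) : ℤ), (Nat.fib (k + 1) : ℤ);
      (Nat.fib (k + 1) : ℤ), (Nat.fib k : ℤ)] := by
  induction k with
  | zero => simp [Q, pow_one]
  | succ k ih =>
    rw [pow_succ, ih, Q]
    ext i j
    fin_cases i <;> fin_cases j <;>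
      simp [Matrix.mul_apply, Fin.sum_univ_two, Nat.fib_add_two] <;> ring

lemma smul_of_dvd {d : ℤ} {A : Mat} (h : ∀ i j, d ∣ A i j) : ∃ C, A = d • C := by
  refine ⟨Matrix.of fun i j => A i j / d, ?_⟩
  ext i j
  simp only [Matrix.smul_apply, Matrix.of_apply, smul_eq_mul]
  exact (Int.mul_ediv_cancel' (h i j)).symm

lemma modEq_iff_intdvd {m a b : ℕ} : a ≡ b [MOD m] ↔ (m : ℤ) ∣ (a : ℤ) - (b : ℤ) := by
  rw [Nat.modEq_iff_dvd, dvd_sub_comm]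

lemma isPer_iff_mat {m k : ℕ} (hk : 0 < k) :
    (Nat.fib k ≡ 0 [MOD m] ∧ Nat.fib (k + 1) ≡ 1 [MOD m]) ↔
      ∃ C, Q ^ k = 1 + (m : ℤ) • C := by
  obtain ⟨j, rfl⟩ : ∃ j, k = j + 1 := ⟨k - 1, by omega⟩
  rw [Q_pow_succ]
  constructor
  · rintro ⟨h0, h1⟩
    have d1 : (m : ℤ) ∣ (Nat.fib (j + 1) : ℤ) := by
      have := modEq_iff_intdvd.1 h0; simpa using this
    have d2 : (m : ℤ) ∣ (Nat.fib (j + 2) : ℤ) - 1 := by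
      have := modEq_iff_intdvd.1 h1; simpa using this
    have d3 : (m : ℤ) ∣ (Nat.fib j : ℤ) - 1 := by
      have e : (Nat.fib j : ℤ) - 1 = ((Nat.fib (j + 2) : ℤ) - 1) - (Nat.fib (j + 1) : ℤ) := by
        rw [Nat.fib_add_two]; push_cast; ring
      rw [e]; exact dvd_sub d2 d1
    obtain ⟨C, hC⟩ := smul_of_dvd (d := (m : ℤ))
      (A := !![(Nat.fib (j + 2) : ℤ) - 1, (Nat.fib (j + 1) : ℤ);
        (Nat.fib (j + 1) : ℤ), (Nat.fib j : ℤ) - 1])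
      (by intro i l; fin_cases i <;> fin_cases l <;> simpa using by assumption)
    refine ⟨C, ?_⟩
    rw [← hC]
    ext i l
    fin_cases i <;> fin_cases l <;> simp [Matrix.one_apply] <;> ring
  · rintro ⟨C, hC⟩
    have h00 : (Nat.fib (j + 2) : ℤ) = 1 + (m : ℤ) * C 0 0 := by
      have h := congrFun (congrFun hC 0) 0
      simp only [Matrix.add_apply, Matrix.smul_apply, smul_eq_mul, Matrix.one_apply_eq] at h
      simpa using h
    have h01 : (Nat.fib (j + 1) : ℤ) = (m : ℤ) * C 0 1 := by
      have h := congrFun (congrFun hC 0) 1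
      simp only [Matrix.add_apply, Matrix.smul_apply, smul_eq_mul] at h
      rw [Matrix.one_apply_ne (by decide)] at h
      simpa using h
    constructor
    · rw [modEq_iff_intdvd]
      simp [h01]
    · rw [modEq_iff_intdvd]
      exact ⟨C 0 0, by
        rw [show j + 1 + 1 = j + 2 by omega]
        push_cast
        linarith [h00]⟩

lemma natCast_mat (c : ℕ) : ((c : ℕ) : Mat) = (c : ℤ) • (1 : Mat) := by
  simp [zsmul_eq_mul]

lemma lift_pow {p e : ℕ} (hp : p.Prime) (he : 0 < e) (hpe : p ≠ 2 ∨ 2 ≤ e)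
    (A : Mat) :
    ∃ B, (1 + ((p:ℤ)^e) • A)^p = 1 + ((p:ℤ)^(e+1)) • A + ((p:ℤ)^(e+2)) • B := by
  have hp2 := hp.two_le
  obtain ⟨q, hq⟩ : ∃ q, p = q + 2 := ⟨p - 2, by omega⟩
  have hscal : ∀ m, 2 ≤ m → m ≤ p → ((p:ℤ))^(e+2) ∣ (p.choose m : ℤ) * ((p:ℤ)^e)^m := by
    intro m hm2 hmp
    rcases eq_or_lt_of_le hmp with heq | hlt
    · rw [heq, Nat.choose_self, Nat.cast_one, one_mul, ← pow_mul]
      refine pow_dvd_pow _ ?_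
      rcases hpe with hh | hh
      · have h3 : 3 ≤ p := by omega
        nlinarith
      · nlinarith
    · have hch : (p:ℤ) ∣ (p.choose m : ℤ) :=
        Int.natCast_dvd_natCast.2 (hp.dvd_choose_self (by omega) hlt)
      have hpow : ((p:ℤ))^(e+1) ∣ ((p:ℤ)^e)^m := by
        rw [← pow_mul]
        exact pow_dvd_pow _ (by nlinarith)
      have : ((p:ℤ))^(e+2) = (p:ℤ) * ((p:ℤ))^(e+1) := by ring
      rw [this]
      exact mul_dvd_mul hch hpow
  set M : Mat := ((p:ℤ)^e) • A with hM
  have hbin : (1 + M)^p = ∑ m ∈ range (p+1), ((p.choose m : ℤ) * ((p:ℤ)^e)^m) • A^m := by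
    rw [add_comm 1 M, (Commute.one_right M).add_pow]
    refine Finset.sum_congr rfl fun m _ => ?_
    rw [one_pow, mul_one, hM, smul_pow, natCast_mat, mul_smul_comm, mul_one, smul_smul,
      mul_comm]
  rw [hq] at hbin
  rw [Finset.sum_range_succ', Finset.sum_range_succ'] at hbin
  rw [← hq] at hbin
  refine ⟨∑ i ∈ range (q+1),
      ((p.choose (i+2) : ℤ) * ((p:ℤ)^e)^(i+2) / (p:ℤ)^(e+2)) • A^(i+2), ?_⟩
  rw [hbin]
  rw [Finset.smul_sum]
  have hsum : ∀ i ∈ range (q+1),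
      ((p.choose (i+1+1) : ℤ) * ((p:ℤ)^e)^(i+1+1)) • A^(i+1+1)
        = ((p:ℤ))^(e+2) • (((p.choose (i+2) : ℤ) * ((p:ℤ)^e)^(i+2) / (p:ℤ)^(e+2)) • A^(i+2)) := by
    intro i hi
    rw [smul_smul, Int.mul_ediv_cancel' (hscal (i+2) (by omega) (by simp at hi; omega))]
  rw [Finset.sum_congr rfl hsum]
  simp only [zero_add, pow_zero, pow_one, Nat.choose_zero_right, Nat.choose_one_right,
    Nat.cast_one, one_smul, one_mul, mul_one, smul_smul]
  rw [show (p:ℤ) * (p:ℤ)^e = (p:ℤ)^(e+1) by ring]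
  abel

lemma smul_entry_eq {c d : ℤ} {A C : Mat} (h : c • A = d • C) (a b : Fin 2) :
    c * A a b = d * C a b := by
  have := congrFun (congrFun h a) b
  simpa [Matrix.smul_apply, smul_eq_mul] using this

lemma main (p : ℕ) (hp : p.Prime) (e : ℕ) (he : 0 < e) (hpe : p ≠ 2 ∨ 2 ≤ e)
    (h : pisano (p ^ e) ≠ pisano (p ^ (e + 1))) :
    ∀ i : ℕ, pisano (p ^ (e + i)) = p ^ i * pisano (p ^ e) := by
  have hp2 := hp.two_le
  have hm2 : ∀ j : ℕ, 0 < j → 2 ≤ p ^ j := fun j hj =>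
    le_trans hp2 (Nat.le_self_pow (by omega) p)
  set k := pisano (p ^ e) with hkdef
  have hkpos : 0 < k := (pisano_spec (hm2 e he)).1
  have hkper : isPer (p ^ e) k := (pisano_spec (hm2 e he)).2
  have hpz : (p : ℤ) ≠ 0 := by positivity
  obtain ⟨A0, hA0⟩ := (isPer_iff_mat hkpos).1 (isPer_iff.1 hkper)
  rw [Nat.cast_pow] at hA0
  have hA0nd : ¬ ∀ a b, (p:ℤ) ∣ A0 a b := by
    intro hall
    obtain ⟨C, hC⟩ := smul_of_dvd hall
    have hQC : Q ^ k = 1 + ((p ^ (e+1) : ℕ) : ℤ) • C := by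
      rw [hA0, hC, smul_smul]
      push_cast
      ring_nf
    have hper1 : isPer (p ^ (e+1)) k := isPer_iff.2 ((isPer_iff_mat hkpos).2 ⟨C, hQC⟩)
    have hdvd1 : pisano (p ^ (e+1)) ∣ k := pisano_dvd (hm2 (e+1) (by omega)) hper1
    have hdvd2 : k ∣ pisano (p ^ (e+1)) :=
      pisano_dvd_pisano (hm2 e he) (hm2 (e+1) (by omega)) (pow_dvd_pow p (by omega))
    exact h (Nat.dvd_antisymm hdvd2 hdvd1)
  have key : ∀ i : ℕ, pisano (p ^ (e + i)) = p ^ i * k ∧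
      ∃ A : Mat, Q ^ (p ^ i * k) = 1 + ((p:ℤ) ^ (e + i)) • A ∧ ¬ ∀ a b, (p:ℤ) ∣ A a b := by
    intro i
    induction i with
    | zero => exact ⟨by simp [hkdef], A0, by simpa using hA0, hA0nd⟩
    | succ i ih =>
      obtain ⟨hpis, A, hA, hand⟩ := ih
      obtain ⟨B, hB⟩ := lift_pow hp (show 0 < e + i by omega)
        (by rcases hpe with hh | hh; exact Or.inl hh; exact Or.inr (by omega)) A
      have hQ : Q ^ (p ^ (i+1) * k) = 1 + ((p:ℤ) ^ (e + (i+1))) • (A + (p:ℤ) • B) := by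
        have e1 : p ^ (i+1) * k = (p ^ i * k) * p := by ring
        rw [e1, pow_mul, hA, hB, smul_add, smul_smul]
        rw [show (p:ℤ) ^ (e + (i+1)) * (p:ℤ) = (p:ℤ) ^ (e + i + 2) by ring,
          show e + (i+1) = e + i + 1 by ring]
        abel
      set A' := A + (p:ℤ) • B with hA'def
      have hA'nd : ¬ ∀ a b, (p:ℤ) ∣ A' a b := by
        intro hall
        apply hand
        intro a b
        have hdv := hall a b
        have : A' a b = A a b + (p:ℤ) * B a b := by
          simp only [hA'def, Matrix.add_apply, Matrix.smul_apply, smul_eq_mul]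
        rw [this] at hdv
        exact (dvd_add_right (Dvd.intro _ rfl)).1 (by rwa [add_comm] at hdv)
      have hpkpos : 0 < p ^ (i+1) * k :=
        Nat.mul_pos (pow_pos (by omega) _) hkpos
      have hpkpos' : 0 < p ^ i * k :=
        Nat.mul_pos (pow_pos (by omega) _) hkpos
      have hper_next : isPer (p ^ (e + (i+1))) (p ^ (i+1) * k) := by
        refine isPer_iff.2 ((isPer_iff_mat hpkpos).2 ⟨A', ?_⟩)
        rw [hQ, Nat.cast_pow]
      have hdvd_down : pisano (p ^ (e + (i+1))) ∣ p ^ (i+1) * k :=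
        pisano_dvd (hm2 _ (by omega)) hper_next
      have hdvd_up : p ^ i * k ∣ pisano (p ^ (e + (i+1))) := by
        rw [← hpis]
        exact pisano_dvd_pisano (hm2 _ (by omega)) (hm2 _ (by omega))
          (pow_dvd_pow p (by omega))
      have hne : pisano (p ^ (e + (i+1))) ≠ p ^ i * k := by
        intro heq
        have hper' : isPer (p ^ (e + (i+1))) (p ^ i * k) := by
          rw [← heq]
          exact (pisano_spec (hm2 _ (by omega))).2
        obtain ⟨C, hC⟩ := (isPer_iff_mat hpkpos').1 (isPer_iff.1 hper')
        rw [Nat.cast_pow] at hC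
        apply hand
        intro a b
        have hsm : ((p:ℤ) ^ (e + i)) • A = ((p:ℤ) ^ (e + (i+1))) • C := by
          have := hA.symm.trans hC
          exact add_left_cancel this
        have hent := smul_entry_eq hsm a b
        have hpne : ((p:ℤ) ^ (e + i)) ≠ 0 := pow_ne_zero _ hpz
        refine ⟨C a b, ?_⟩
        apply Int.eq_of_mul_eq_mul_left hpne
        rw [hent, show e + (i+1) = (e+i) + 1 by ring, pow_succ]
        ring
      have hfin : pisano (p ^ (e + (i+1))) = p ^ (i+1) * k := by
        obtain ⟨t, ht⟩ := hdvd_up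
        have htdvd : t ∣ p := by
          have : p ^ i * k * t ∣ p ^ i * k * p := by
            rw [← ht]
            have : p ^ (i+1) * k = p ^ i * k * p := by ring
            rwa [this] at hdvd_down
          exact (Nat.mul_dvd_mul_iff_left hpkpos').1 this
        rcases (hp.eq_one_or_self_of_dvd t htdvd) with h1 | hpp
        · rw [h1, mul_one] at ht
          exact absurd ht hne
        · rw [ht, hpp]
          ring
      exact ⟨hfin, A', hQ, hA'nd⟩
  intro i
  exact (key i).1

end PisanoAux

/-- if `p` is prime, `e ≥ 1` and `π(p^e) ≠ π(p^{e+1})`, then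
`π(p^{e+i}) = p^i · π(p^e)` for every `i ≥ 1`. -/
theorem pisano_pow_of_ne (p : ℕ) (hp : p.Prime) (e : ℕ) (he : 0 < e)
    (h : pisano (p ^ e) ≠ pisano (p ^ (e + 1))) :
    ∀ i : ℕ, 0 < i → pisano (p ^ (e + i)) = p ^ i * pisano (p ^ e) := by
  by_cases hc : p = 2 ∧ e = 1
  · obtain ⟨hp2, he1⟩ := hc
    subst hp2 he1
    have h2 : pisano 2 = 3 := by
      have hper : PisanoAux.isPer 2 3 := PisanoAux.isPer_iff.2 ⟨by decide, by decide⟩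
      have hdvd : pisano 2 ∣ 3 := PisanoAux.pisano_dvd (by norm_num) hper
      have hne1 : pisano 2 ≠ 1 := by
        intro h1
        have hh := (PisanoAux.pisano_spec (show (2:ℕ) ≤ 2 by norm_num)).2
        rw [h1] at hh
        exact absurd (PisanoAux.isPer_iff.1 hh).1 (by decide)
      rcases (Nat.prime_three.eq_one_or_self_of_dvd _ hdvd) with hh | hh
      · exact absurd hh hne1
      · exact hh
    have h4 : pisano 4 = 6 := by
      have hper : PisanoAux.isPer 4 6 := PisanoAux.isPer_iff.2 ⟨by decide, by decide⟩
      have hdvd : pisano 4 ∣ 6 := PisanoAux.pisano_dvd (by norm_num) hper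
      have h24 : pisano 2 ∣ pisano 4 :=
        PisanoAux.pisano_dvd_pisano (by norm_num) (by norm_num) (by norm_num)
      rw [h2] at h24
      have hne3 : pisano 4 ≠ 3 := by
        intro h3
        have hh := (PisanoAux.pisano_spec (show (2:ℕ) ≤ 4 by norm_num)).2
        rw [h3] at hh
        exact absurd (PisanoAux.isPer_iff.1 hh).2 (by decide)
      obtain ⟨t, ht⟩ := h24
      have htd : t ∣ 2 := by
        have h6 : (3 * t) ∣ (3 * 2) := by rw [← ht]; exact hdvd
        exact (Nat.mul_dvd_mul_iff_left (by norm_num : 0 < 3)).1 h6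
      rcases (Nat.prime_two.eq_one_or_self_of_dvd _ htd) with hh | hh
      · rw [hh, mul_one] at ht; exact absurd ht hne3
      · rw [hh] at ht; rw [ht]
    have h48 : pisano (2 ^ 2) ≠ pisano (2 ^ (2 + 1)) := by
      norm_num
      intro heq
      have hh := (PisanoAux.pisano_spec (show (2:ℕ) ≤ 8 by norm_num)).2
      rw [← heq, h4] at hh
      exact absurd (PisanoAux.isPer_iff.1 hh).2 (by decide)
    intro i hi
    have hmain := PisanoAux.main 2 hp 2 (by norm_num) (Or.inr le_rfl) h48 (i - 1)
    rw [show 2 + (i - 1) = 1 + i by omega] at hmain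
    rw [hmain, pow_one, h2]
    rw [show ((2:ℕ) ^ 2) = 4 by norm_num, h4]
    rw [show (2:ℕ) ^ i = 2 * 2 ^ (i - 1) by
      rw [← pow_succ']; congr 1; omega]
    ring
  · have hpe : p ≠ 2 ∨ 2 ≤ e := by
      by_cases hh : p = 2
      · right
        have : e ≠ 1 := fun h1 => hc ⟨hh, h1⟩
        omega
      · exact Or.inl hh
    intro i hi
    exact PisanoAux.main p hp e he hpe h i
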